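/- If there exists a continuous map g : S^h → ‖K‖ to the geometric realization of some finite simplicial complex K of dimension at most l-1 satisfying g(x) ≠ g(-x) for all x ∈ S^h, then S^h can be covered by open sets, none containing a pair of antipodal points, such that every point lies in at most l of the sets; and conversely. -/

import Mathlib

open Set Finset

namespace SimonyiTardosAux

variable {E : Type*} [NormedAddCommGroup E] [NormedSpace ℝ E] [FiniteDimensional ℝ E]

/-- A barycentric representation of a point of a simplicial complex. -/
def Rep (K : Geometry.SimplicialComplex ℝ E) (y : E) (w : E → ℝ) : Prop :=
  ∃ s ∈ K.faces, (∀ v, v ∉ s → w v = 0) ∧ (∀ v, 0 ≤ w v) ∧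
    (∑ v ∈ s, w v = 1) ∧ (∑ v ∈ s, w v • v = y)

theorem rep_of_mem_hull {K : Geometry.SimplicialComplex ℝ E} {s : Finset E} {y : E}
    (hs : s ∈ K.faces) (hy : y ∈ convexHull ℝ (s : Set E)) :
    ∃ w : E → ℝ, Rep K y w ∧ (∀ v, v ∉ s → w v = 0) ∧
      (∑ v ∈ s, w v = 1) ∧ (∑ v ∈ s, w v • v = y) := by
  classical
  obtain ⟨w, h0, h1, h2⟩ := Finset.mem_convexHull'.1 hy
  have e1 : ∑ v ∈ s, (if v ∈ s then w v else 0) = 1 := by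
    rw [Finset.sum_congr rfl fun v hv => if_pos hv]; exact h1
  have e2 : ∑ v ∈ s, (if v ∈ s then w v else 0) • v = y := by
    rw [Finset.sum_congr rfl fun v (hv : v ∈ s) => by rw [if_pos hv]]; exact h2
  have e0 : ∀ v, 0 ≤ (if v ∈ s then w v else 0) := by
    intro v; by_cases hv : v ∈ s
    · simpa [hv] using h0 v hv
    · simp [hv]
  exact ⟨fun v => if v ∈ s then w v else 0,
    ⟨s, hs, fun v hv => if_neg hv, e0, e1, e2⟩, fun v hv => if_neg hv, e1, e2⟩

theorem Rep.mem_hull {K : Geometry.SimplicialComplex ℝ E} {y : E} {w : E → ℝ} {s : Finset E}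
    (hs : s ∈ K.faces) (hz : ∀ v, v ∉ s → w v = 0) (h1 : ∑ v ∈ s, w v = 1)
    (h2 : ∑ v ∈ s, w v • v = y) (hnn : ∀ v, 0 ≤ w v) :
    y ∈ convexHull ℝ (s : Set E) :=
  Finset.mem_convexHull'.2 ⟨w, fun v _ => hnn v, h1, h2⟩

theorem rep_unique {K : Geometry.SimplicialComplex ℝ E} {y : E} {w w' : E → ℝ}
    (h : Rep K y w) (h' : Rep K y w') : w = w' := by
  classical
  obtain ⟨s, hs, hz, hnn, hsum, hval⟩ := h
  obtain ⟨s', hs', hz', hnn', hsum', hval'⟩ := h'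
  have hys : y ∈ convexHull ℝ (s : Set E) := Rep.mem_hull hs hz hsum hval hnn
  have hys' : y ∈ convexHull ℝ (s' : Set E) := Rep.mem_hull hs' hz' hsum' hval' hnn'
  have hy2 : y ∈ convexHull ℝ ((s ∩ s' : Finset E) : Set E) := by
    have := K.inter_subset_convexHull hs hs' ⟨hys, hys'⟩
    rwa [← Finset.coe_inter] at this
  obtain ⟨w0, h00, h01, h02⟩ := Finset.mem_convexHull'.1 hy2
  set w1 : E → ℝ := fun v => if v ∈ s ∩ s' then w0 v else 0 with hw1
  have key : ∀ (t : Finset E), t ∈ K.faces → s ∩ s' ⊆ t →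
      ∀ (u : E → ℝ), (∀ v, v ∉ t → u v = 0) → (∑ v ∈ t, u v = 1) →
      (∑ v ∈ t, u v • v = y) → u = w1 := by
    intro t ht hsub u huz husum huval
    have hsum1 : ∑ v ∈ t, w1 v = ∑ v ∈ t, u v := by
      rw [husum, hw1]
      simp only [Finset.sum_ite_mem]
      rw [Finset.inter_eq_right.2 hsub, h01]
    have hval1 : ∑ v ∈ t, w1 v • v = ∑ v ∈ t, u v • v := by
      rw [huval, hw1]
      simp only [ite_smul, zero_smul, Finset.sum_ite_mem]
      rw [Finset.inter_eq_right.2 hsub, h02]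
    have := (K.indep ht).eq_of_sum_eq_sum_subtype hsum1.symm hval1.symm
    funext v
    by_cases hv : v ∈ t
    · exact this v hv
    · rw [huz v hv, hw1]
      simp only
      rw [if_neg fun hvv => hv (hsub hvv)]
  have h1 := key s hs Finset.inter_subset_left w hz hsum hval
  have h2 := key s' hs' Finset.inter_subset_right w' hz' hsum' hval'
  rw [h1, h2]

/-- Barycentric coordinates of a point of a simplicial complex. -/
noncomputable def bc (K : Geometry.SimplicialComplex ℝ E) (y : E) : E → ℝ :=
  open Classical in if hy : ∃ w, Rep K y w then hy.choose else 0

theorem bc_rep {K : Geometry.SimplicialComplex ℝ E} {y : E} (hy : y ∈ K.space) :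
    Rep K y (bc K y) := by
  rw [Geometry.SimplicialComplex.mem_space_iff] at hy
  obtain ⟨s, hs, hy⟩ := hy
  obtain ⟨w, hw, -⟩ := rep_of_mem_hull hs hy
  rw [bc]
  rw [dif_pos ⟨w, hw⟩]
  exact (Exists.intro w hw).choose_spec

theorem bc_eq {K : Geometry.SimplicialComplex ℝ E} {y : E} {w : E → ℝ} (h : Rep K y w) :
    bc K y = w := by
  rw [bc]
  rw [dif_pos ⟨w, h⟩]
  exact rep_unique (Exists.intro w h).choose_spec h

theorem continuousOn_biUnion_of_closed {ι α β : Type*} [TopologicalSpace α]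
    [TopologicalSpace β] {I : Set ι} (hI : I.Finite) {A : ι → Set α} {f : α → β}
    (hcl : ∀ i ∈ I, IsClosed (A i)) (hc : ∀ i ∈ I, ContinuousOn f (A i)) :
    ContinuousOn f (⋃ i ∈ I, A i) := by
  intro y hy
  have hall : ∀ i ∈ I, ContinuousWithinAt f (A i) y := by
    intro i hi
    by_cases h : y ∈ A i
    · exact hc i hi y h
    · exact continuousWithinAt_of_notMem_closure (by rwa [(hcl i hi).closure_eq])
  rw [ContinuousWithinAt, nhdsWithin_biUnion hI]
  rw [Filter.tendsto_iSup]
  intro i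
  rw [Filter.tendsto_iSup]
  intro hi
  exact hall i hi

theorem bc_continuousOn (K : Geometry.SimplicialComplex ℝ E) (hfin : K.faces.Finite)
    (v : E) : ContinuousOn (fun y => bc K y v) K.space := by
  classical
  have hsp : K.space = ⋃ s ∈ K.faces, convexHull ℝ (s : Set E) := rfl
  rw [hsp]
  apply continuousOn_biUnion_of_closed hfin
  · exact fun s _ => s.finite_toSet.isClosed_convexHull (𝕜 := ℝ)
  intro s hs
  by_cases hv : v ∈ s
  · -- extend the face to an affine basis; `bc · v` agrees with a coordinate function
    obtain ⟨t, hst, hti, htt⟩ :=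
      exists_subset_affineIndependent_affineSpan_eq_top (K.indep hs)
    have hvt : v ∈ t := hst hv
    let b : AffineBasis ↑t ℝ E := ⟨fun x => ↑x, hti, by rwa [Subtype.range_coe]⟩
    have hcont : Continuous (b.coord ⟨v, hvt⟩) :=
      AffineMap.continuous_of_finiteDimensional _
    refine ContinuousOn.congr hcont.continuousOn ?_
    intro y hy
    obtain ⟨w, hw, hwz, hw1, hw2⟩ := rep_of_mem_hull hs hy
    have hbc : bc K y = w := bc_eq hw
    -- index the face inside the basis index type
    let sι : Finset ↑t := s.attach.map
      ⟨fun u => (⟨u.1, hst u.2⟩ : ↑t), fun a b hab =>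
        Subtype.ext (Subtype.mk_eq_mk.1 hab)⟩
    have hsum : ∑ u ∈ sι, w ↑u = 1 := by
      rw [Finset.sum_map]
      show ∑ u ∈ s.attach, w ↑u = 1
      rw [Finset.sum_attach s fun u => w u]
      exact hw1
    have hmem : (⟨v, hvt⟩ : ↑t) ∈ sι :=
      Finset.mem_map.2 ⟨⟨v, hv⟩, Finset.mem_attach _ _, rfl⟩
    have hcomb : sι.affineCombination ℝ b (fun u => w ↑u) = y := by
      rw [Finset.affineCombination_eq_linear_combination _ _ _ hsum]
      rw [Finset.sum_map]
      show ∑ u ∈ s.attach, w ↑u • (↑u : E) = y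
      rw [Finset.sum_attach s fun u => w u • u]
      exact hw2
    have hco := b.coord_apply_combination_of_mem hmem hsum
    rw [hcomb] at hco
    show bc K y v = b.coord ⟨v, hvt⟩ y
    rw [hbc]
    exact hco.symm
  · refine ContinuousOn.congr (continuousOn_const (c := (0 : ℝ))) ?_
    intro y hy
    obtain ⟨w, hw, hwz, -, -⟩ := rep_of_mem_hull hs hy
    show bc K y v = 0
    rw [bc_eq hw]
    exact hwz v hv

theorem forward_dir (h l N : ℕ)
    (K : Geometry.SimplicialComplex ℝ (EuclideanSpace ℝ (Fin N)))
    (g : EuclideanSpace ℝ (Fin (h + 1)) → EuclideanSpace ℝ (Fin N))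
    (hfin : K.faces.Finite) (hcard : ∀ s ∈ K.faces, s.card ≤ l)
    (hgcont : ContinuousOn g (Metric.sphere 0 1))
    (hgspace : ∀ x ∈ Metric.sphere (0 : EuclideanSpace ℝ (Fin (h + 1))) 1, g x ∈ K.space)
    (hgne : ∀ x ∈ Metric.sphere (0 : EuclideanSpace ℝ (Fin (h + 1))) 1, g x ≠ g (-x)) :
    ∃ (n : ℕ) (U : Fin n → Set (EuclideanSpace ℝ (Fin (h + 1)))),
      (∀ i, ∃ V, IsOpen V ∧ U i = V ∩ Metric.sphere 0 1) ∧
      (Metric.sphere (0 : EuclideanSpace ℝ (Fin (h + 1))) 1 ⊆ ⋃ i, U i) ∧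
      (∀ i, ∀ x, x ∈ U i → -x ∉ U i) ∧
      (∀ x ∈ Metric.sphere (0 : EuclideanSpace ℝ (Fin (h + 1))) 1,
        {i : Fin n | x ∈ U i}.ncard ≤ l) := by
  classical
  set S := Metric.sphere (0 : EuclideanSpace ℝ (Fin (h + 1))) 1 with hS
  have hnegS : ∀ x ∈ S, -x ∈ S := by
    intro x hx
    rw [hS, mem_sphere_zero_iff_norm, norm_neg]
    rwa [hS, mem_sphere_zero_iff_norm] at hx
  -- the (finite) vertex set
  have hVS : (⋃ s ∈ K.faces, (s : Set (EuclideanSpace ℝ (Fin N)))).Finite :=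
    hfin.biUnion fun s _ => s.finite_toSet
  set Vt := hVS.toFinset with hVt
  have hsubVt : ∀ {s}, s ∈ K.faces → s ⊆ Vt := by
    intro s hs v hv
    rw [hVt, Set.Finite.mem_toFinset]
    exact Set.mem_biUnion hs hv
  -- basic facts about barycentric coordinates
  have hbnn : ∀ y ∈ K.space, ∀ v, 0 ≤ bc K y v := by
    intro y hy v
    obtain ⟨s, hs, hz, hnn, h1, h2⟩ := bc_rep hy
    exact hnn v
  have hbz : ∀ y ∈ K.space, ∀ v, bc K y v ≠ 0 → v ∈ Vt := by
    intro y hy v hv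
    obtain ⟨s, hs, hz, hnn, h1, h2⟩ := bc_rep hy
    by_contra hvn
    exact hv (hz v fun hvs => hvn (hsubVt hs hvs))
  have hbsum : ∀ y ∈ K.space, ∑ v ∈ Vt, bc K y v = 1 := by
    intro y hy
    obtain ⟨s, hs, hz, hnn, h1, h2⟩ := bc_rep hy
    rw [← h1]
    exact (Finset.sum_subset (hsubVt hs) fun v _ hv => hz v hv).symm
  have hbval : ∀ y ∈ K.space, ∑ v ∈ Vt, bc K y v • v = y := by
    intro y hy
    obtain ⟨s, hs, hz, hnn, h1, h2⟩ := bc_rep hy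
    calc ∑ v ∈ Vt, bc K y v • v = ∑ v ∈ s, bc K y v • v :=
          (Finset.sum_subset (hsubVt hs) fun v _ hv => by rw [hz v hv, zero_smul]).symm
      _ = y := h2
  -- enumerate the vertices
  set n := Fintype.card ↑Vt with hn
  set eqv := Fintype.equivFin ↑Vt with heqv
  set ve : Fin n → EuclideanSpace ℝ (Fin N) := fun i => ↑(eqv.symm i) with hve
  have hveinj : Function.Injective ve := fun i j hij =>
    eqv.symm.injective (Subtype.ext hij)
  -- the comparison function
  set B : EuclideanSpace ℝ (Fin (h + 1)) → EuclideanSpace ℝ (Fin N) → ℝ :=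
    fun x v => bc K (g x) v - bc K (g (-x)) v with hB
  have hBcont : ∀ v, ContinuousOn (fun x => B x v) S := by
    intro v
    have h1 : ContinuousOn (fun x => bc K (g x) v) S :=
      (bc_continuousOn K hfin v).comp hgcont fun x hx => hgspace x hx
    have h2 : ContinuousOn (fun x => bc K (g (-x)) v) S :=
      (bc_continuousOn K hfin v).comp
        (hgcont.comp continuous_neg.continuousOn fun x hx => hnegS x hx)
        fun x hx => hgspace _ (hnegS x hx)
    exact h1.sub h2
  refine ⟨n, fun i => (fun x => B x (ve i)) ⁻¹' Set.Ioi 0 ∩ S, ?_, ?_, ?_, ?_⟩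
  · -- relatively open
    intro i
    obtain ⟨u, hu, hequ⟩ := continuousOn_iff'.1 (hBcont (ve i)) (Set.Ioi 0) isOpen_Ioi
    exact ⟨u, hu, hequ⟩
  · -- covering
    intro x hx
    by_contra hc
    rw [Set.mem_iUnion] at hc
    push_neg at hc
    have hgx := hgspace x hx
    have hgnx := hgspace _ (hnegS x hx)
    have hle : ∀ i, B x (ve i) ≤ 0 := by
      intro i
      by_contra hpos
      exact hc i ⟨Set.mem_Ioi.2 (not_le.1 hpos), hx⟩
    have hsum0 : ∑ i : Fin n, B x (ve i) = 0 := by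
      have he1 : ∑ i : Fin n, B x (ve i) = ∑ v ∈ Vt, B x v := by
        rw [← Finset.sum_coe_sort Vt fun v => B x v]
        exact Equiv.sum_comp eqv.symm fun a => B x ↑a
      rw [he1, hB]
      simp only [Finset.sum_sub_distrib]
      rw [hbsum _ hgx, hbsum _ hgnx, sub_self]
    have hall0 : ∀ i, B x (ve i) = 0 := by
      intro i
      exact (Finset.sum_eq_zero_iff_of_nonpos fun i _ => hle i).1 hsum0 i (Finset.mem_univ i)
    have hfuneq : bc K (g x) = bc K (g (-x)) := by
      funext v
      by_cases hv : v ∈ Vt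
      · have := hall0 (eqv ⟨v, hv⟩)
        rw [hve] at this
        simp only [Equiv.symm_apply_apply] at this
        exact sub_eq_zero.1 this
      · have h1 : bc K (g x) v = 0 := by
          by_contra hne; exact hv (hbz _ hgx v hne)
        have h2 : bc K (g (-x)) v = 0 := by
          by_contra hne; exact hv (hbz _ hgnx v hne)
        rw [h1, h2]
    have : g x = g (-x) := by
      rw [← hbval _ hgx, ← hbval _ hgnx, hfuneq]
    exact hgne x hx this
  · -- antipode-free
    intro i x hx hnx
    have h1 : 0 < bc K (g x) (ve i) - bc K (g (-x)) (ve i) := hx.1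
    have h2 : 0 < bc K (g (-x)) (ve i) - bc K (g (- -x)) (ve i) := hnx.1
    rw [neg_neg] at h2
    linarith
  · -- multiplicity
    intro x hx
    obtain ⟨s, hs, hz, hnn, h1, h2⟩ := bc_rep (hgspace x hx)
    have hbceq : bc K (g x) = _ := bc_eq ⟨s, hs, hz, hnn, h1, h2⟩
    have hsub1 : {i : Fin n | x ∈ (fun x => B x (ve i)) ⁻¹' Set.Ioi 0 ∩ S} ⊆
        ve ⁻¹' (s : Set (EuclideanSpace ℝ (Fin N))) := by
      intro i hi
      have hpos : 0 < bc K (g x) (ve i) - bc K (g (-x)) (ve i) := hi.1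
      have hnn' : 0 ≤ bc K (g (-x)) (ve i) := hbnn _ (hgspace _ (hnegS x hx)) _
      have : 0 < bc K (g x) (ve i) := by linarith
      by_contra hns
      have h0 : bc K (g x) (ve i) = 0 := hz _ (by simpa using hns)
      linarith
    calc {i : Fin n | x ∈ (fun x => B x (ve i)) ⁻¹' Set.Ioi 0 ∩ S}.ncard
        ≤ (ve ⁻¹' (s : Set (EuclideanSpace ℝ (Fin N)))).ncard :=
          Set.ncard_le_ncard hsub1 (Set.toFinite _)
      _ ≤ ((s : Set (EuclideanSpace ℝ (Fin N)))).ncard :=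
          Set.ncard_le_ncard_of_injOn ve (fun a ha => ha) hveinj.injOn s.finite_toSet
      _ = s.card := Set.ncard_coe_finset _
      _ ≤ l := hcard s hs

theorem euclid_sum_apply {ι κ : Type*} [Fintype κ] (s : Finset ι)
    (f : ι → EuclideanSpace ℝ κ) (j : κ) : (∑ i ∈ s, f i) j = ∑ i ∈ s, f i j := by
  induction s using Finset.cons_induction with
  | empty => rfl
  | cons a s ha ih => rw [Finset.sum_cons, Finset.sum_cons, PiLp.add_apply, ih]

theorem backward_dir (h l n : ℕ) (U : Fin n → Set (EuclideanSpace ℝ (Fin (h + 1))))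
    (hopen : ∀ i, ∃ V, IsOpen V ∧ U i = V ∩ Metric.sphere 0 1)
    (hcover : Metric.sphere (0 : EuclideanSpace ℝ (Fin (h + 1))) 1 ⊆ ⋃ i, U i)
    (hanti : ∀ i, ∀ x, x ∈ U i → -x ∉ U i)
    (hmult : ∀ x ∈ Metric.sphere (0 : EuclideanSpace ℝ (Fin (h + 1))) 1,
        {i : Fin n | x ∈ U i}.ncard ≤ l) :
    ∃ (N : ℕ) (K : Geometry.SimplicialComplex ℝ (EuclideanSpace ℝ (Fin N)))
        (g : EuclideanSpace ℝ (Fin (h + 1)) → EuclideanSpace ℝ (Fin N)),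
      K.faces.Finite ∧ (∀ s ∈ K.faces, s.card ≤ l) ∧
      ContinuousOn g (Metric.sphere 0 1) ∧
      (∀ x ∈ Metric.sphere (0 : EuclideanSpace ℝ (Fin (h + 1))) 1, g x ∈ K.space) ∧
      (∀ x ∈ Metric.sphere (0 : EuclideanSpace ℝ (Fin (h + 1))) 1, g x ≠ g (-x)) := by
  classical
  set S := Metric.sphere (0 : EuclideanSpace ℝ (Fin (h + 1))) 1 with hS
  have hnegS : ∀ x ∈ S, -x ∈ S := by
    intro x hx
    rw [hS, mem_sphere_zero_iff_norm, norm_neg]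
    rwa [hS, mem_sphere_zero_iff_norm] at hx
  choose V hVopen hVeq using hopen
  set W : Fin n → Set (EuclideanSpace ℝ (Fin (h + 1))) :=
    fun i => V i ∩ Metric.ball 0 2 with hW
  have hWopen : ∀ i, IsOpen (W i) := fun i => (hVopen i).inter Metric.isOpen_ball
  have hSball : S ⊆ Metric.ball (0 : EuclideanSpace ℝ (Fin (h + 1))) 2 := by
    intro x hx
    rw [hS, Metric.mem_sphere] at hx
    rw [Metric.mem_ball, hx]
    norm_num
  have hUW : ∀ i, U i = W i ∩ S := by
    intro i
    rw [hVeq i, hW]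
    ext x
    constructor
    · rintro ⟨hxv, hxs⟩
      exact ⟨⟨hxv, hSball hxs⟩, hxs⟩
    · rintro ⟨⟨hxv, -⟩, hxs⟩
      exact ⟨hxv, hxs⟩
  have hWc_ne : ∀ i, ((W i)ᶜ).Nonempty := by
    intro i
    refine ⟨EuclideanSpace.single (0 : Fin (h + 1)) (2 : ℝ), fun hc => ?_⟩
    have := hc.2
    rw [Metric.mem_ball, dist_zero_right, EuclideanSpace.norm_single] at this
    norm_num at this
  set φ : Fin n → EuclideanSpace ℝ (Fin (h + 1)) → ℝ :=
    fun i x => Metric.infDist x (W i)ᶜ with hφ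
  have hφcont : ∀ i, Continuous (φ i) := fun i => Metric.continuous_infDist_pt _
  have hφnn : ∀ i x, 0 ≤ φ i x := fun i x => Metric.infDist_nonneg
  have hφpos : ∀ i x, x ∈ W i ↔ 0 < φ i x := by
    intro i x
    rw [hφ]
    rw [← (hWopen i).isClosed_compl.notMem_iff_infDist_pos (hWc_ne i)]
    simp
  set σ : EuclideanSpace ℝ (Fin (h + 1)) → ℝ := fun x => ∑ i, φ i x with hσ
  have hσcont : Continuous σ := continuous_finset_sum _ fun i _ => hφcont i
  have hσpos : ∀ x ∈ S, 0 < σ x := by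
    intro x hx
    obtain ⟨i, hi⟩ := Set.mem_iUnion.1 (hcover hx)
    have hxi : x ∈ W i := ((hUW i) ▸ hi).1
    exact Finset.sum_pos' (fun j _ => hφnn j x)
      ⟨i, Finset.mem_univ i, (hφpos i x).1 hxi⟩
  have hφU : ∀ i x, x ∈ S → (x ∈ U i ↔ 0 < φ i x) := by
    intro i x hxS
    rw [hUW i]
    constructor
    · intro hx
      exact (hφpos i x).1 hx.1
    · intro hx
      exact ⟨(hφpos i x).2 hx, hxS⟩
  set e : Fin n → EuclideanSpace ℝ (Fin n) := fun i => EuclideanSpace.single i 1 with he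
  have happ : ∀ (s : Finset (Fin n)) (w : Fin n → ℝ) (j : Fin n),
      (∑ i ∈ s, w i • e i) j = if j ∈ s then w j else 0 := by
    intro s w j
    rw [euclid_sum_apply]
    have : ∀ i ∈ s, (w i • e i) j = if i = j then w i else 0 := by
      intro i _
      rw [PiLp.smul_apply, he]
      simp only [EuclideanSpace.single_apply, smul_eq_mul, mul_ite, mul_one, mul_zero]
      simp [eq_comm]
    rw [Finset.sum_congr rfl this, Finset.sum_ite_eq' s j w]
  have heinj : Function.Injective e := by
    intro i j hij
    by_contra hne
    have h1 : e i i = 1 := by rw [he]; simp [EuclideanSpace.single_apply]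
    have h2 : e j i = 0 := by rw [he]; simp [EuclideanSpace.single_apply, hne]
    rw [hij, h2] at h1
    norm_num at h1
  have heaff : AffineIndependent ℝ e := by
    rw [affineIndependent_iff]
    intro s w hw0 hcomb i hi
    have := congrArg (fun v : EuclideanSpace ℝ (Fin n) => v i) hcomb
    simp only at this
    rw [happ s w i, if_pos hi] at this
    simpa using this
  -- the simplicial complex (the nerve of the cover)
  set F : Set (Finset (EuclideanSpace ℝ (Fin n))) :=
    {s | ∃ t : Finset (Fin n), t.Nonempty ∧ (∃ x ∈ S, ∀ i ∈ t, x ∈ U i) ∧ s = t.image e}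
    with hF
  have hindep : ∀ {s}, s ∈ F → AffineIndependent ℝ ((↑) : ↑s → EuclideanSpace ℝ (Fin n)) := by
    rintro s ⟨t, -, -, rfl⟩
    refine heaff.range.mono ?_
    intro y hy
    obtain ⟨i, -, rfl⟩ := Finset.mem_image.1 (Finset.mem_coe.1 hy)
    exact Set.mem_range_self i
  set K : Geometry.SimplicialComplex ℝ (EuclideanSpace ℝ (Fin n)) :=
    { faces := F
      isRelLowerSet_faces := by
        have not_empty_mem : ∅ ∉ F := by
          rintro ⟨t, hne, -, heq⟩
          exact Finset.Nonempty.ne_empty (hne.image e) heq.symm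
        have down_closed : ∀ {s t'}, s ∈ F → t' ⊆ s → t' ≠ ∅ → t' ∈ F := by
          rintro s t' ⟨t, -, ⟨x, hxS, hxU⟩, rfl⟩ hsub hne
          refine ⟨t.filter (fun i => e i ∈ t'), ?_, ⟨x, hxS, fun i hi =>
            hxU i (Finset.mem_filter.1 hi).1⟩, ?_⟩
          · obtain ⟨y, hy⟩ := Finset.nonempty_of_ne_empty hne
            obtain ⟨i, hit, rfl⟩ := Finset.mem_image.1 (hsub hy)
            exact ⟨i, Finset.mem_filter.2 ⟨hit, hy⟩⟩
          · ext y
            rw [Finset.mem_image]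
            constructor
            · intro hy
              obtain ⟨i, hit, rfl⟩ := Finset.mem_image.1 (hsub hy)
              exact ⟨i, Finset.mem_filter.2 ⟨hit, hy⟩, rfl⟩
            · rintro ⟨i, hi, rfl⟩
              exact (Finset.mem_filter.1 hi).2
        intro s hs
        exact ⟨Finset.nonempty_iff_ne_empty.2 (fun h => not_empty_mem (h ▸ hs)),
          fun t' hsub hne => down_closed hs hsub hne.ne_empty⟩
      indep := hindep
      inter_subset_convexHull := by
        rintro s1 s2 ⟨t1, -, -, rfl⟩ ⟨t2, -, -, rfl⟩
        have hbig : AffineIndependent ℝ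
            ((↑) : ↑(Finset.univ.image e) → EuclideanSpace ℝ (Fin n)) := by
          refine heaff.range.mono ?_
          intro y hy
          obtain ⟨i, -, rfl⟩ := Finset.mem_image.1 (Finset.mem_coe.1 hy)
          exact Set.mem_range_self i
        exact (hbig.convexHull_inter
          (Finset.image_subset_image (Finset.subset_univ t1))
          (Finset.image_subset_image (Finset.subset_univ t2))).superset } with hK
  -- the map
  set g : EuclideanSpace ℝ (Fin (h + 1)) → EuclideanSpace ℝ (Fin n) :=
    fun x => ∑ i, (φ i x / σ x) • e i with hg
  have hgapp : ∀ x j, g x j = φ j x / σ x := by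
    intro x j
    rw [hg]
    simp only
    rw [happ Finset.univ _ j, if_pos (Finset.mem_univ j)]
  have hφzero : ∀ x ∈ S, ∀ i, x ∉ U i → φ i x = 0 := by
    intro x hxS i hxi
    by_contra hne
    exact hxi ((hφU i x hxS).2 (lt_of_le_of_ne (hφnn i x) (Ne.symm hne)))
  refine ⟨n, K, g, ?_, ?_, ?_, ?_, ?_⟩
  · -- finiteness of faces
    refine Set.Finite.subset (Set.finite_range fun t : Finset (Fin n) => t.image e) ?_
    rintro s ⟨t, -, -, rfl⟩
    exact ⟨t, rfl⟩
  · -- cardinality bound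
    rintro s ⟨t, -, ⟨x, hxS, hxU⟩, rfl⟩
    refine Finset.card_image_le.trans ?_
    have h1 : (↑t : Set (Fin n)).ncard ≤ ({i | x ∈ U i} : Set (Fin n)).ncard :=
      Set.ncard_le_ncard (fun i hi => hxU i hi) (Set.toFinite _)
    rw [Set.ncard_coe_finset] at h1
    exact h1.trans (hmult x hxS)
  · -- continuity
    refine continuousOn_finset_sum _ fun i _ => ContinuousOn.fun_smul ?_ continuousOn_const
    exact ((hφcont i).continuousOn.div hσcont.continuousOn
      fun x hx => (hσpos x hx).ne')
  · -- image in the space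
    intro x hxS
    set t : Finset (Fin n) := Finset.univ.filter (fun i => x ∈ U i) with ht
    have htmem : ∀ i, i ∈ t ↔ x ∈ U i := by
      intro i; rw [ht, Finset.mem_filter]; simp
    have htne : t.Nonempty := by
      obtain ⟨i, hi⟩ := Set.mem_iUnion.1 (hcover hxS)
      exact ⟨i, (htmem i).2 hi⟩
    have hface : t.image e ∈ K.faces :=
      ⟨t, htne, ⟨x, hxS, fun i hi => (htmem i).1 hi⟩, rfl⟩
    have hsum1 : ∑ i ∈ t, φ i x / σ x = 1 := by
      rw [← Finset.sum_div]
      rw [Finset.sum_subset (Finset.subset_univ t)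
        (fun i _ hi => hφzero x hxS i fun hu => hi ((htmem i).2 hu))]
      exact div_self (hσpos x hxS).ne'
    have hgeq : g x = ∑ i ∈ t, (φ i x / σ x) • e i := by
      rw [hg]
      refine (Finset.sum_subset (Finset.subset_univ t) fun i _ hi => ?_).symm
      rw [hφzero x hxS i fun hu => hi ((htmem i).2 hu), zero_div, zero_smul]
    rw [Geometry.SimplicialComplex.mem_space_iff]
    refine ⟨t.image e, hface, ?_⟩
    have := Finset.centerMass_mem_convexHull t
      (fun i _ => div_nonneg (hφnn i x) (hσpos x hxS).le)
      (by rw [hsum1]; norm_num)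
      (fun i hi => Finset.mem_coe.2 (Finset.mem_image_of_mem e hi))
    rwa [Finset.centerMass_eq_of_sum_1 _ _ hsum1, ← hgeq] at this
  · -- antipodality
    intro x hxS heq
    obtain ⟨i, hi⟩ := Set.mem_iUnion.1 (hcover hxS)
    have h1 : 0 < g x i := by
      rw [hgapp]
      exact div_pos ((hφU i x hxS).1 hi) (hσpos x hxS)
    have h2 : g (-x) i = 0 := by
      rw [hgapp]
      rw [hφzero (-x) (hnegS x hxS) i (hanti i x hi), zero_div]
    rw [heq, h2] at h1
    norm_num at h1

end SimonyiTardosAux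


/-- **Simonyi–Tardos equivalence.** There exists a continuous map
`g : S^h → ‖K‖` to the geometric realization of some finite simplicial complex
`K` of dimension at most `l - 1` (every face has at most `l` vertices) with
`g x ≠ g (-x)` for all `x ∈ S^h`, if and only if the sphere `S^h` can be covered
by finitely many open sets, none containing a pair of antipodal points, such
that every point lies in at most `l` of the sets. -/
theorem simonyi_tardos_equivalence (h l : ℕ) :
    (∃ (N : ℕ) (K : Geometry.SimplicialComplex ℝ (EuclideanSpace ℝ (Fin N)))
        (g : EuclideanSpace ℝ (Fin (h + 1)) → EuclideanSpace ℝ (Fin N)),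
      K.faces.Finite ∧ (∀ s ∈ K.faces, s.card ≤ l) ∧
      ContinuousOn g (Metric.sphere 0 1) ∧
      (∀ x ∈ Metric.sphere (0 : EuclideanSpace ℝ (Fin (h + 1))) 1,
        g x ∈ K.space) ∧
      (∀ x ∈ Metric.sphere (0 : EuclideanSpace ℝ (Fin (h + 1))) 1,
        g x ≠ g (-x))) ↔
    (∃ (n : ℕ) (U : Fin n → Set (EuclideanSpace ℝ (Fin (h + 1)))),
      (∀ i, ∃ V, IsOpen V ∧ U i = V ∩ Metric.sphere 0 1) ∧
      (Metric.sphere (0 : EuclideanSpace ℝ (Fin (h + 1))) 1 ⊆ ⋃ i, U i) ∧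
      (∀ i, ∀ x, x ∈ U i → -x ∉ U i) ∧
      (∀ x ∈ Metric.sphere (0 : EuclideanSpace ℝ (Fin (h + 1))) 1,
        {i : Fin n | x ∈ U i}.ncard ≤ l)) := by
  constructor
  · rintro ⟨N, K, g, hfin, hcard, hgcont, hgspace, hgne⟩
    exact SimonyiTardosAux.forward_dir h l N K g hfin hcard hgcont hgspace hgne
  · rintro ⟨n, U, hopen, hcover, hanti, hmult⟩
    exact SimonyiTardosAux.backward_dir h l n U hopen hcover hanti hmult
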